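/- Let C = I_X be an ideal in F[G*]. Then C is Hermitian self-orthogonal (C ⊆ C^{⊥_H}) if and only if C = C_0^Z for some splitting (Z, X_0, X_1) of G which is split by −q; that is, if and only if C is a subcode I_{Z ∪ X_0} arising from a partition G = Z ∪ X_0 ∪ X_1 with τ_{−q}(X_0) = X_1 and τ_{−q}(X_1) = X_0. -/
import Mathlib


open scoped BigOperators
open scoped BigOperators

/-- The evaluation of the element of `F[G*]` with coefficient function `a` at `x ∈ G`,
namely `f(x) = ∑ ψ, a ψ * ψ x ∈ K`. -/
noncomputable def evalF {G : Type} [AddCommGroup G] {F K : Type} [Field F] [Field K]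
    [Algebra F K] [Fintype (AddChar G K)] (a : AddChar G K → F) (x : G) : K :=
  ∑ ψ : AddChar G K, algebraMap F K (a ψ) * ψ x

/-- The code `I_X = {f ∈ F[G*] : f(x) = 0 for all x ∈ X}`. -/
noncomputable def codeSet {G : Type} [AddCommGroup G] (F K : Type) [Field F] [Field K]
    [Algebra F K] [Fintype (AddChar G K)] (X : Set G) : Set (AddChar G K → F) :=
  {a | ∀ x ∈ X, evalF a x = 0}

/-- The Hermitian inner product `⟨f, g⟩_H = ∑ ψ, a ψ * (b ψ)^q` on `F[G*]`. -/
noncomputable def herm {G : Type} [AddCommGroup G] {F K : Type} [Field F] [Field K]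
    [Algebra F K] [Fintype (AddChar G K)] (q : ℕ) (a b : AddChar G K → F) : F :=
  ∑ ψ : AddChar G K, a ψ * (b ψ) ^ q

/-- The Hermitian dual `C^{⊥_H}` of a code `C ⊆ F[G*]`. -/
noncomputable def hermDual {G : Type} [AddCommGroup G] (F K : Type) [Field F] [Field K]
    [Algebra F K] [Fintype (AddChar G K)] (q : ℕ) (C : Set (AddChar G K → F)) :
    Set (AddChar G K → F) :=
  {a | ∀ b ∈ C, herm q a b = 0}

/-- The image `τ_s(X)` of `X ⊆ G` under the multiplication-by-`s` map `τ_s : x ↦ s • x`. -/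
def tauImg {G : Type} [AddCommGroup G] (s : ℤ) (X : Set G) : Set G :=
  (fun x : G => s • x) '' X

section CharAux

variable {G : Type} [AddCommGroup G] [Fintype G]
variable {K : Type} [Field K]

lemma heru_of_prim (hK : ∃ ζ : K, IsPrimitiveRoot ζ (AddMonoid.exponent G)) :
    HasEnoughRootsOfUnity K (Monoid.exponent (Multiplicative G)) := by
  rw [Monoid.exponent_multiplicative]
  exact ⟨hK, inferInstance⟩

lemma char_separate (hK : ∃ ζ : K, IsPrimitiveRoot ζ (AddMonoid.exponent G))
    {x : G} (hx : x ≠ 0) : ∃ ψ : AddChar G K, ψ x ≠ 1 := by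
  have := heru_of_prim (G := G) hK
  obtain ⟨φ, hφ⟩ := CommGroup.exists_apply_ne_one_of_hasEnoughRootsOfUnity
    (Multiplicative G) K (a := Multiplicative.ofAdd x) (by simpa using hx)
  refine ⟨AddChar.toMonoidHomEquiv.symm ((Units.coeHom K).comp φ), ?_⟩
  simp only [AddChar.toMonoidHomEquiv_symm_apply, MonoidHom.coe_comp, Units.coeHom_apply,
    Function.comp_apply]
  intro h
  exact hφ (Units.ext h)

lemma card_addChar [Fintype (AddChar G K)]
    (hK : ∃ ζ : K, IsPrimitiveRoot ζ (AddMonoid.exponent G)) :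
    Fintype.card (AddChar G K) = Fintype.card G := by
  have := heru_of_prim (G := G) hK
  obtain ⟨e⟩ := CommGroup.monoidHom_mulEquiv_of_hasEnoughRootsOfUnity (Multiplicative G) K
  have e2 : (Multiplicative G →* K) ≃ (Multiplicative G →* Kˣ) :=
    { toFun := fun f => f.toHomUnits
      invFun := fun f => (Units.coeHom K).comp f
      left_inv := fun f => by ext x; simp [MonoidHom.coe_toHomUnits]
      right_inv := fun f => by ext x; rfl }
  calc Fintype.card (AddChar G K)
      = Fintype.card G := Fintype.card_congr
        (AddChar.toMonoidHomEquiv.trans ((e2.trans e.toEquiv).trans Multiplicative.toAdd))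

lemma sum_char_zero [Fintype (AddChar G K)]
    (hK : ∃ ζ : K, IsPrimitiveRoot ζ (AddMonoid.exponent G)) :
    ∑ ψ : AddChar G K, (ψ (0 : G) : K) = (Fintype.card G : K) := by
  rw [← card_addChar (K := K) hK]
  simp [Finset.card_univ]

lemma sum_char_ne [Fintype (AddChar G K)]
    (hK : ∃ ζ : K, IsPrimitiveRoot ζ (AddMonoid.exponent G)) {x : G} (hx : x ≠ 0) :
    ∑ ψ : AddChar G K, (ψ x : K) = 0 := by
  classical
  have h := AddChar.sum_eq_ite (A := AddChar G K) (R := K) (AddChar.doubleDualEmb x)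
  have hdd : AddChar.doubleDualEmb x ≠ (0 : AddChar (AddChar G K) K) := by
    intro h0
    obtain ⟨ψ, hψ⟩ := char_separate hK hx
    exact hψ (by simpa using DFunLike.congr_fun h0 ψ)
  simp only [AddChar.doubleDualEmb_apply] at h
  rw [h, if_neg hdd]

end CharAux

section SmulAux

variable {G : Type} [AddCommGroup G] [Fintype G]

lemma nsmul_inj {k : ℕ} (hk : Nat.Coprime (Fintype.card G) k) :
    Function.Injective (fun x : G => k • x) := by
  intro x y h
  have h0 : k • (x - y) = 0 := by
    simp only at h
    rw [smul_sub, h, sub_self]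
  have h1 : addOrderOf (x - y) ∣ k := addOrderOf_dvd_of_nsmul_eq_zero h0
  have h2 : addOrderOf (x - y) ∣ Fintype.card G := addOrderOf_dvd_card
  have : addOrderOf (x - y) = 1 :=
    Nat.eq_one_of_dvd_coprimes hk h2 h1
  rw [AddMonoid.addOrderOf_eq_one_iff] at this
  exact sub_eq_zero.mp this

lemma nsmul_bij {k : ℕ} (hk : Nat.Coprime (Fintype.card G) k) :
    Function.Bijective (fun x : G => k • x) :=
  Finite.injective_iff_bijective.mp (nsmul_inj hk)

lemma zsmul_neg_inj {k : ℕ} (hk : Nat.Coprime (Fintype.card G) k) :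
    Function.Injective (fun x : G => (-(k : ℤ)) • x) := by
  intro x y h
  simp only [neg_smul, natCast_zsmul, neg_inj] at h
  exact nsmul_inj hk h

end SmulAux

section FrobAux

variable {F K : Type} [Field F] [Fintype F] [Field K] [Algebra F K]

lemma frob_range {q2 : ℕ} (hF : Fintype.card F = q2) (h1 : 1 < q2) {z : K}
    (hz : z ^ q2 = z) : ∃ c : F, algebraMap F K c = z := by
  classical
  set s : Finset K := Finset.univ.image (algebraMap F K) with hs
  by_cases hzs : z ∈ s
  · obtain ⟨c, -, hc⟩ := Finset.mem_image.mp hzs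
    exact ⟨c, hc⟩
  exfalso
  set P : Polynomial K := Polynomial.X ^ q2 - Polynomial.X with hPdef
  have hdegX : (Polynomial.X : Polynomial K).degree < (Polynomial.X ^ q2 : Polynomial K).degree := by
    rw [Polynomial.degree_X_pow, Polynomial.degree_X]
    exact_mod_cast h1
  have hdeg : P.degree = q2 := by
    rw [hPdef, Polynomial.degree_sub_eq_left_of_degree_lt hdegX, Polynomial.degree_X_pow]
  have hP0 : P ≠ 0 := by
    intro h
    rw [h, Polynomial.degree_zero] at hdeg
    exact (WithBot.bot_ne_coe) hdeg
  have hndeg : P.natDegree = q2 := Polynomial.natDegree_eq_of_degree_eq_some hdeg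
  have hroot : ∀ w ∈ insert z s, w ∈ P.roots.toFinset := by
    intro w hw
    rw [Multiset.mem_toFinset, Polynomial.mem_roots hP0]
    have hww : w ^ q2 = w := by
      rcases Finset.mem_insert.mp hw with rfl | hws
      · exact hz
      · obtain ⟨c, -, rfl⟩ := Finset.mem_image.mp hws
        rw [← map_pow, ← hF, FiniteField.pow_card]
    simp [Polynomial.IsRoot, hPdef, hww]
  have hsub : insert z s ⊆ P.roots.toFinset := hroot
  have hcard : q2 + 1 ≤ P.roots.toFinset.card := by
    have h2 : s.card = q2 := by
      rw [hs, Finset.card_image_of_injective _ (algebraMap F K).injective,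
        Finset.card_univ, hF]
    have := Finset.card_le_card hsub
    rwa [Finset.card_insert_of_notMem hzs, h2] at this
  have := le_trans (Multiset.toFinset_card_le P.roots) (Polynomial.card_roots' P)
  omega

end FrobAux

section OrbitAux

variable {G : Type} [AddCommGroup G] [Fintype G]

lemma nsmul_pow_eq_self_iff {y : G} {s : ℕ} (hs : 0 < s)
    (hcop : Nat.Coprime s (addOrderOf y)) (k : ℕ) :
    (s ^ k) • y = y ↔ orderOf (ZMod.unitOfCoprime s hcop) ∣ k := by
  have h1 : 1 ≤ s ^ k := Nat.one_le_pow _ _ hs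
  have step1 : (s ^ k) • y = y ↔ (s ^ k - 1) • y = 0 := by
    rw [sub_nsmul y h1, one_nsmul]
    exact ⟨fun h => by rw [h, add_neg_cancel], fun h => by rwa [add_neg_eq_zero] at h⟩
  have step2 : (s ^ k - 1) • y = 0 ↔ addOrderOf y ∣ s ^ k - 1 :=
    addOrderOf_dvd_iff_nsmul_eq_zero.symm
  have step3 : addOrderOf y ∣ s ^ k - 1 ↔ ((s : ZMod (addOrderOf y)) ^ k = 1) := by
    rw [← ZMod.natCast_eq_zero_iff]
    rw [Nat.cast_sub h1, Nat.cast_pow, Nat.cast_one, sub_eq_zero, eq_comm]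
  have step4 : ((s : ZMod (addOrderOf y)) ^ k = 1) ↔
      (ZMod.unitOfCoprime s hcop) ^ k = 1 := by
    rw [Units.ext_iff, Units.val_pow_eq_pow_val, ZMod.coe_unitOfCoprime, Units.val_one]
  rw [step1, step2, step3, step4, orderOf_dvd_iff_pow_eq_one]

end OrbitAux

section OrbitAux2

variable {G : Type} [AddCommGroup G] [Fintype G]

lemma orbit_distinct_le {y : G} {s : ℕ} (hs : 0 < s)
    (hcard : Nat.Coprime (Fintype.card G) s)
    (hcop : Nat.Coprime s (addOrderOf y))
    {i j : ℕ} (hj : j < orderOf (ZMod.unitOfCoprime s hcop)) (hij : i ≤ j)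
    (h : (s ^ i) • y = (s ^ j) • y) : i = j := by
  have hdecomp : (s ^ j) • y = (s ^ i) • ((s ^ (j - i)) • y) := by
    rw [smul_smul, ← pow_add, Nat.add_sub_cancel' hij]
  rw [hdecomp] at h
  have hinj := nsmul_inj (k := s ^ i) (hcard.pow_right i)
  have h2 : (s ^ (j - i)) • y = y := (hinj h.symm)
  rw [nsmul_pow_eq_self_iff hs hcop] at h2
  rcases Nat.eq_zero_or_pos (j - i) with h0 | hpos
  · omega
  · have := Nat.le_of_dvd hpos h2
    omega

lemma orbit_distinct {y : G} {s : ℕ} (hs : 0 < s)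
    (hcard : Nat.Coprime (Fintype.card G) s)
    (hcop : Nat.Coprime s (addOrderOf y))
    {i j : ℕ} (hi : i < orderOf (ZMod.unitOfCoprime s hcop))
    (hj : j < orderOf (ZMod.unitOfCoprime s hcop))
    (h : (s ^ i) • y = (s ^ j) • y) : i = j := by
  rcases le_total i j with hij | hij
  · exact orbit_distinct_le hs hcard hcop hj hij h
  · exact (orbit_distinct_le hs hcard hcop hi hij h.symm).symm

lemma closure_pow {X : Set G} {t : ℕ} (hX : ∀ x ∈ X, t • x ∈ X) (k : ℕ) :
    ∀ x ∈ X, (t ^ k) • x ∈ X := by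
  induction k with
  | zero => intro x hx; simpa using hx
  | succ k ih =>
      intro x hx
      have := ih (t • x) (hX x hx)
      rw [smul_smul, ← pow_succ] at this
      exact this

lemma pow_orbit_fixed {w : G} {t r : ℕ} (hw : (t ^ r) • w = w) (j : ℕ) :
    ((t ^ r) ^ j) • w = w := by
  induction j with
  | zero => simp
  | succ j ih => rw [pow_succ, mul_smul, hw, ih]

lemma orbit_notMem {X : Set G} {t : ℕ} (hX : ∀ x ∈ X, t • x ∈ X) {w : G} {r : ℕ}
    (hr : 0 < r) (hw : (t ^ r) • w = w) (hwX : w ∉ X) (j : ℕ) : (t ^ j) • w ∉ X := by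
  intro hmem
  apply hwX
  have h1 := closure_pow hX (j * (r - 1)) _ hmem
  rw [smul_smul, ← pow_add] at h1
  have h2 : j * (r - 1) + j = r * j := by
    cases r with
    | zero => omega
    | succ r => simp only [Nat.succ_sub_one]; ring
  rw [h2, pow_mul] at h1
  rwa [pow_orbit_fixed hw j] at h1

end OrbitAux2

section UAux

variable {K : Type} [Field K]

lemma exists_good_u {d r : ℕ} (hd : 0 < d) (hr : 0 < r)
    {ζ : K} (hζ : IsPrimitiveRoot ζ d) {e : ℕ → ℕ}
    (hlt : ∀ j, j < r → e j < d) (hinj : ∀ i, i < r → ∀ j, j < r → e i = e j → i = j) :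
    ∃ u : K, u ^ d = 1 ∧ ∑ j ∈ Finset.range r, u ^ (e j) ≠ 0 := by
  classical
  by_contra hcon
  push_neg at hcon
  set P : Polynomial K := ∑ j ∈ Finset.range r, Polynomial.X ^ (e j) with hP
  have hcoeff : P.coeff (e 0) = 1 := by
    rw [hP, Polynomial.finset_sum_coeff]
    rw [Finset.sum_eq_single 0]
    · simp
    · intro j hj hj0
      rw [Polynomial.coeff_X_pow]
      rw [if_neg]
      intro hEq
      exact hj0 (hinj j (Finset.mem_range.mp hj) 0 hr hEq.symm)
    · intro h0
      exact absurd (Finset.mem_range.mpr hr) h0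
  have hP0 : P ≠ 0 := fun h => by simp [h] at hcoeff
  have hdeg : P.natDegree < d := by
    have : P.degree < (d : ℕ) := by
      refine lt_of_le_of_lt (Polynomial.degree_sum_le _ _) ?_
      rw [Finset.sup_lt_iff (by exact_mod_cast WithBot.bot_lt_coe d)]
      intro j hj
      rw [Polynomial.degree_X_pow]
      exact_mod_cast hlt j (Finset.mem_range.mp hj)
    exact (Polynomial.natDegree_lt_iff_degree_lt hP0).mpr this
  have hroots : ∀ k, k < d → (ζ ^ k) ∈ P.roots.toFinset := by
    intro k hk
    rw [Multiset.mem_toFinset, Polynomial.mem_roots hP0]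
    have hu : (ζ ^ k) ^ d = 1 := by
      rw [← pow_mul, mul_comm, pow_mul, hζ.pow_eq_one, one_pow]
    have := hcon (ζ ^ k) hu
    simp only [Polynomial.IsRoot, hP, Polynomial.eval_finset_sum, Polynomial.eval_pow,
      Polynomial.eval_X]
    exact this
  have himg : (Finset.range d).image (fun k => ζ ^ k) ⊆ P.roots.toFinset := by
    intro w hw
    obtain ⟨k, hk, rfl⟩ := Finset.mem_image.mp hw
    exact hroots k (Finset.mem_range.mp hk)
  have hcardimg : ((Finset.range d).image (fun k => ζ ^ k)).card = d := by
    rw [Finset.card_image_of_injOn, Finset.card_range]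
    intro i hi j hj hij
    exact hζ.pow_inj (Finset.mem_range.mp hi) (Finset.mem_range.mp hj) hij
  have hle := Finset.card_le_card himg
  have := le_trans (Multiset.toFinset_card_le P.roots) (Polynomial.card_roots' P)
  omega

end UAux

section Identity

variable {G : Type} [AddCommGroup G] [Fintype G]
variable {F K : Type} [Field F] [Field K] [Algebra F K] [Fintype (AddChar G K)]

lemma char_val_ne_zero (ψ : AddChar G K) (x : G) : (ψ x : K) ≠ 0 :=
  (ψ.val_isUnit x).ne_zero

lemma herm_eval_identity {p e q : ℕ} [Fact p.Prime] [CharP K p] (hqe : q = p ^ e)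
    (hn : Nat.Coprime (Fintype.card G) q)
    (hK : ∃ ζ : K, IsPrimitiveRoot ζ (AddMonoid.exponent G))
    (a b : AddChar G K → F) :
    (Fintype.card G : K) * algebraMap F K (herm q a b)
      = ∑ x : G, evalF a ((-(q : ℤ)) • x) * (evalF b x) ^ q := by
  classical
  have hb : ∀ x : G, (evalF b x) ^ q
      = ∑ φ : AddChar G K, algebraMap F K (b φ ^ q) * φ ((q : ℕ) • x) := by
    intro x
    rw [evalF, hqe, sum_pow_char_pow]
    refine Finset.sum_congr rfl fun φ _ => ?_
    rw [mul_pow, ← map_pow, ← hqe, AddChar.map_nsmul_eq_pow]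
  -- the combined character
  have key : ∀ (ψ φ : AddChar G K),
      (∑ x : G, (ψ ((-(q : ℤ)) • x) : K) * φ ((q : ℕ) • x))
        = if ψ = φ then (Fintype.card G : K) else 0 := by
    intro ψ φ
    set χ : AddChar G K :=
      ψ.compAddMonoidHom (zsmulAddGroupHom (-(q : ℤ)))
        * φ.compAddMonoidHom (zsmulAddGroupHom (q : ℤ)) with hχ
    have hχx : ∀ x : G, (χ x : K) = ψ ((-(q : ℤ)) • x) * φ ((q : ℕ) • x) := by
      intro x
      rw [hχ, AddChar.mul_apply, AddChar.compAddMonoidHom_apply,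
        AddChar.compAddMonoidHom_apply]
      simp [zsmulAddGroupHom, natCast_zsmul]
    have hsum := AddChar.sum_eq_ite (A := G) (R := K) χ
    have hcond : χ = 0 ↔ ψ = φ := by
      constructor
      · intro h0
        ext z
        obtain ⟨x, rfl⟩ := (nsmul_bij hn).2 z
        have h1 : (χ x : K) = 1 := by rw [h0]; simp
        rw [hχx] at h1
        have h2 : (ψ ((-(q : ℤ)) • x) : K) * ψ ((q : ℕ) • x) = 1 := by
          rw [← AddChar.map_add_eq_mul]
          have : (-(q : ℤ)) • x + (q : ℕ) • x = 0 := by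
            rw [← natCast_zsmul, ← add_zsmul]
            simp
          rw [this, AddChar.map_zero_eq_one]
        have h3 := h1.trans h2.symm
        exact (mul_left_cancel₀ (char_val_ne_zero ψ _) h3.symm)
      · rintro rfl
        ext x
        rw [hχx]
        rw [← AddChar.map_add_eq_mul]
        have : (-(q : ℤ)) • x + (q : ℕ) • x = 0 := by
          rw [← natCast_zsmul, ← add_zsmul]; simp
        rw [this, AddChar.map_zero_eq_one, AddChar.zero_apply]
      -- done
    calc ∑ x : G, (ψ ((-(q : ℤ)) • x) : K) * φ ((q : ℕ) • x)
        = ∑ x : G, (χ x : K) := by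
          exact (Finset.sum_congr rfl fun x _ => (hχx x).symm)
      _ = if χ = 0 then ((Fintype.card G : ℕ) : K) else 0 := hsum
      _ = if ψ = φ then (Fintype.card G : K) else 0 := by
          by_cases h : ψ = φ <;> simp [hcond, h]
  have diag : ∀ ψ : AddChar G K,
      (∑ φ : AddChar G K, algebraMap F K (a ψ) * algebraMap F K (b φ ^ q)
        * (if ψ = φ then (Fintype.card G : K) else 0))
      = algebraMap F K (a ψ) * algebraMap F K (b ψ ^ q) * (Fintype.card G : K) := by
    intro ψ
    rw [Finset.sum_eq_single ψ]
    · rw [if_pos rfl]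
    · intro φ _ hφ
      rw [if_neg (fun h => hφ h.symm), mul_zero]
    · intro h; exact absurd (Finset.mem_univ ψ) h
  calc (Fintype.card G : K) * algebraMap F K (herm q a b)
      = ∑ ψ : AddChar G K, algebraMap F K (a ψ) * algebraMap F K (b ψ ^ q)
          * (Fintype.card G : K) := by
        rw [herm, map_sum, Finset.mul_sum]
        refine Finset.sum_congr rfl fun ψ _ => ?_
        rw [map_mul]; ring
    _ = ∑ ψ : AddChar G K, ∑ φ : AddChar G K, algebraMap F K (a ψ) * algebraMap F K (b φ ^ q)
          * (if ψ = φ then (Fintype.card G : K) else 0) := by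
        exact (Finset.sum_congr rfl fun ψ _ => (diag ψ).symm)
    _ = ∑ ψ : AddChar G K, ∑ φ : AddChar G K, algebraMap F K (a ψ) * algebraMap F K (b φ ^ q)
          * ∑ x : G, (ψ ((-(q : ℤ)) • x) : K) * φ ((q : ℕ) • x) := by
        refine Finset.sum_congr rfl fun ψ _ => Finset.sum_congr rfl fun φ _ => ?_
        rw [key]
    _ = ∑ ψ : AddChar G K, ∑ φ : AddChar G K, ∑ x : G,
          (algebraMap F K (a ψ) * ψ ((-(q : ℤ)) • x))
            * (algebraMap F K (b φ ^ q) * φ ((q : ℕ) • x)) := by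
        refine Finset.sum_congr rfl fun ψ _ => Finset.sum_congr rfl fun φ _ => ?_
        rw [Finset.mul_sum]
        refine Finset.sum_congr rfl fun x _ => ?_
        ring
    _ = ∑ x : G, ∑ ψ : AddChar G K, ∑ φ : AddChar G K,
          (algebraMap F K (a ψ) * ψ ((-(q : ℤ)) • x))
            * (algebraMap F K (b φ ^ q) * φ ((q : ℕ) • x)) := by
        refine Eq.trans (Finset.sum_congr rfl fun ψ _ => Finset.sum_comm) Finset.sum_comm
    _ = ∑ x : G, evalF a ((-(q : ℤ)) • x) * (evalF b x) ^ q := by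
        refine Finset.sum_congr rfl fun x _ => ?_
        rw [hb, evalF, Finset.sum_mul_sum]

end Identity

section CardNeZero

variable {G : Type} [AddCommGroup G] [Fintype G] {K : Type} [Field K]

lemma card_cast_ne_zero (hK : ∃ ζ : K, IsPrimitiveRoot ζ (AddMonoid.exponent G)) :
    (Fintype.card G : K) ≠ 0 := by
  intro h
  obtain ⟨ζ, hζ⟩ := hK
  set p := ringChar K with hp
  have hcast : (Fintype.card G : K) = 0 := h
  have hdvd : p ∣ Fintype.card G := (ringChar.spec K _).mp hcast
  rcases CharP.char_is_prime_or_zero K p with hprime | hzero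
  · haveI : Fact p.Prime := ⟨hprime⟩
    obtain ⟨y, hy⟩ := exists_prime_addOrderOf_dvd_card p hdvd
    have hyexp : p ∣ AddMonoid.exponent G := hy ▸ AddMonoid.addOrder_dvd_exponent y
    set m := AddMonoid.exponent G with hm
    have hmpos : 0 < m := Nat.pos_of_ne_zero AddMonoid.exponent_ne_zero_of_finite
    have hmp : m = (m / p) * p := (Nat.div_mul_cancel hyexp).symm
    have hζp : IsPrimitiveRoot (ζ ^ (m / p)) p := IsPrimitiveRoot.pow hmpos hζ hmp
    have hne1 : ζ ^ (m / p) ≠ 1 := hζp.ne_one hprime.one_lt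
    have hpow : (ζ ^ (m / p)) ^ p = 1 := hζp.pow_eq_one
    have : (ζ ^ (m / p)) - 1 = 0 := by
      haveI : CharP K p := ringChar.charP K
      have hfrob : ((ζ ^ (m / p)) - 1) ^ p = 0 := by
        rw [sub_pow_char, hpow, one_pow, sub_self]
      exact pow_eq_zero_iff hprime.ne_zero |>.mp hfrob
    exact hne1 (sub_eq_zero.mp this)
  · haveI : CharP K p := ringChar.charP K
    rw [hzero] at this
    haveI : CharZero K := CharP.charP_to_charZero K
    exact Nat.cast_ne_zero.mpr Fintype.card_ne_zero h

end CardNeZero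

section KeyLemma

variable {G : Type} [AddCommGroup G] [Fintype G]
variable {F K : Type} [Field F] [Fintype F] [Field K] [Algebra F K] [Fintype (AddChar G K)]

lemma key_closed {p e q : ℕ} [Fact p.Prime] [CharP K p] (hqe : q = p ^ e) (hq1 : 1 < q)
    (hF : Fintype.card F = q ^ 2)
    (hn : Nat.Coprime (Fintype.card G) q)
    (hK : ∃ ζ : K, IsPrimitiveRoot ζ (AddMonoid.exponent G))
    (X : Set G) (hX : ∀ x ∈ X, ((q : ℤ) ^ 2) • x ∈ X)
    (hself : ∀ a ∈ codeSet F K X, ∀ b ∈ codeSet F K X, herm q a b = 0)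
    {y : G} (hy : y ∉ X) : ((-(q : ℤ)) • y) ∈ X := by
  classical
  by_contra hy'
  have hq0 : 0 < q := by omega
  have hq20 : 0 < q ^ 2 := by positivity
  have hXn : ∀ x ∈ X, (q ^ 2 : ℕ) • x ∈ X := by
    intro x hx
    have := hX x hx
    rwa [show ((q : ℤ) ^ 2) = ((q ^ 2 : ℕ) : ℤ) by push_cast; ring, natCast_zsmul] at this
  set d := addOrderOf y with hd
  have hd0 : 0 < d := addOrderOf_pos y
  haveI : NeZero d := ⟨hd0.ne'⟩
  have hdn : d ∣ Fintype.card G := addOrderOf_dvd_card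
  have hcopdq : Nat.Coprime d q := Nat.Coprime.coprime_dvd_left hdn hn
  have hcop : Nat.Coprime (q ^ 2) d := (hcopdq.symm.pow_left 2)
  set r := orderOf (ZMod.unitOfCoprime (q ^ 2) hcop) with hrdef
  have hrpos : 0 < r := orderOf_pos _
  have hper : ((q ^ 2) ^ r) • y = y :=
    (nsmul_pow_eq_self_iff hq20 hcop r).mpr dvd_rfl
  have hcard2 : Nat.Coprime (Fintype.card G) (q ^ 2) := hn.pow_right 2
  have hdist : ∀ i, i < r → ∀ j, j < r → ((q ^ 2) ^ i) • y = ((q ^ 2) ^ j) • y → i = j :=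
    fun i hi j hj h => orbit_distinct hq20 hcard2 hcop hi hj h
  -- d divides (q^2)^r - 1
  have hpowr1 : ((q ^ 2 : ℕ) : ZMod d) ^ r = 1 := by
    have h1 := pow_orderOf_eq_one (ZMod.unitOfCoprime (q ^ 2) hcop)
    have := congrArg (Units.val) h1
    rwa [Units.val_pow_eq_pow_val, ZMod.coe_unitOfCoprime, Units.val_one] at this
  have h1le : 1 ≤ (q ^ 2) ^ r := Nat.one_le_pow _ _ hq20
  have hdvd_d : d ∣ (q ^ 2) ^ r - 1 := by
    rw [← ZMod.natCast_eq_zero_iff, Nat.cast_sub h1le, Nat.cast_one, sub_eq_zero]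
    rw [← Nat.cast_pow] at hpowr1
    rw [hpowr1]
  -- primitive d-th root of unity
  obtain ⟨ζ, hζ⟩ := hK
  set m := AddMonoid.exponent G with hm
  have hmpos : 0 < m := Nat.pos_of_ne_zero AddMonoid.exponent_ne_zero_of_finite
  have hdm : d ∣ m := AddMonoid.addOrder_dvd_exponent y
  have hζd : IsPrimitiveRoot (ζ ^ (m / d)) d :=
    IsPrimitiveRoot.pow hmpos hζ (Nat.div_mul_cancel hdm).symm
  -- the good u
  set t : ℕ → ℕ := fun j => (q ^ 2) ^ j with ht
  have hinj_e : ∀ i, i < r → ∀ j, j < r → t i % d = t j % d → i = j := by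
    intro i hi j hj hmod
    refine hdist i hi j hj ?_
    have h1 : (t i % d) • y = (t j % d) • y := by rw [hmod]
    rwa [hd, mod_addOrderOf_nsmul, mod_addOrderOf_nsmul] at h1
  obtain ⟨u, hu1, husum⟩ := exists_good_u hd0 hrpos hζd
    (e := fun j => t j % d) (fun j _ => Nat.mod_lt _ hd0) hinj_e
  have husum' : ∑ j ∈ Finset.range r, u ^ (t j) ≠ 0 := by
    intro h0
    apply husum
    rw [← h0]
    exact Finset.sum_congr rfl fun j _ => (pow_eq_pow_mod (t j) hu1).symm
  -- y'
  set y' : G := (-(q : ℤ)) • y with hy'def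
  have hy'eq : y' = -(q • y) := by rw [hy'def, neg_smul, natCast_zsmul]
  have hy'per : ((q ^ 2) ^ r) • y' = y' := by
    rw [hy'eq, smul_neg, smul_smul, mul_comm, ← smul_smul, hper]
  have hny' : -y' = q • y := by rw [hy'eq, neg_neg]
  -- Frobenius-stability of the coefficient sums
  have hq2e : q ^ 2 = p ^ (e * 2) := by rw [hqe, pow_mul]
  have hfix_gen : ∀ w : K, w ^ ((q ^ 2) ^ r) = w →
      (∑ j ∈ Finset.range r, w ^ (t j)) ^ (q ^ 2) = ∑ j ∈ Finset.range r, w ^ (t j) := by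
    intro w hw
    rw [hq2e, sum_pow_char_pow]
    have hterm : ∀ j, (w ^ (t j)) ^ (p ^ (e * 2)) = w ^ (t (j + 1)) := by
      intro j
      have hstep : t (j + 1) = t j * q ^ 2 := by
        rw [ht]
        exact pow_succ _ _
      rw [hstep, ← hq2e, pow_mul]
    have h3 : w ^ (t r) = w ^ (t 0) := by
      show w ^ ((q ^ 2) ^ r) = w ^ ((q ^ 2) ^ 0)
      rw [pow_zero, pow_one, hw]
    have h1 := Finset.sum_range_succ' (fun j => w ^ (t j)) r
    have h2 := Finset.sum_range_succ (fun j => w ^ (t j)) r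
    have h4 : (∑ j ∈ Finset.range r, w ^ (t (j + 1))) + w ^ (t 0)
        = (∑ j ∈ Finset.range r, w ^ (t j)) + w ^ (t 0) := by
      rw [← h1, h2, h3]
    calc ∑ j ∈ Finset.range r, (w ^ t j) ^ (p ^ (e * 2))
        = ∑ j ∈ Finset.range r, w ^ (t (j + 1)) := Finset.sum_congr rfl fun j _ => hterm j
      _ = ∑ j ∈ Finset.range r, w ^ (t j) := add_right_cancel h4
  have hval_fix : ∀ w : K, w ^ d = 1 → w ^ ((q ^ 2) ^ r) = w := by
    intro w hwd
    obtain ⟨c, hc⟩ := hdvd_d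
    have hEq : (q ^ 2) ^ r = d * c + 1 := by omega
    rw [hEq, pow_add, pow_mul, hwd, one_pow, one_mul, pow_one]
  have hpsy : ∀ ψ : AddChar G K, (ψ (-y) : K) ^ d = 1 := by
    intro ψ
    rw [← AddChar.map_nsmul_eq_pow, smul_neg, hd, addOrderOf_nsmul_eq_zero, neg_zero,
      AddChar.map_zero_eq_one]
  have hpsyfix : ∀ ψ : AddChar G K, (ψ (-y) : K) ^ ((q ^ 2) ^ r) = ψ (-y) :=
    fun ψ => hval_fix _ (hpsy ψ)
  have hpsy'fix : ∀ ψ : AddChar G K, (ψ (-y') : K) ^ ((q ^ 2) ^ r) = ψ (-y') := by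
    intro ψ
    rw [← AddChar.map_nsmul_eq_pow, smul_neg, hy'per]
  have hufix : u ^ ((q ^ 2) ^ r) = u := hval_fix u hu1
  -- coefficient functions
  set cb : AddChar G K → K := fun ψ => ∑ j ∈ Finset.range r, (ψ (-y) : K) ^ (t j) with hcb
  set ca : AddChar G K → K :=
    fun ψ => ∑ j ∈ Finset.range r, (u * (ψ (-y') : K)) ^ (t j) with hca
  have hq21 : 1 < q ^ 2 := by nlinarith
  have hbex : ∀ ψ : AddChar G K, ∃ c : F, algebraMap F K c = cb ψ := by
    intro ψ
    exact frob_range hF hq21 (hfix_gen _ (hpsyfix ψ))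
  have haex : ∀ ψ : AddChar G K, ∃ c : F, algebraMap F K c = ca ψ := by
    intro ψ
    refine frob_range hF hq21 (hfix_gen _ ?_)
    rw [mul_pow, hufix, hpsy'fix]
  set b : AddChar G K → F := fun ψ => (hbex ψ).choose with hbdef
  have hbspec : ∀ ψ, algebraMap F K (b ψ) = cb ψ := fun ψ => (hbex ψ).choose_spec
  set a : AddChar G K → F := fun ψ => (haex ψ).choose with hadef
  have haspec : ∀ ψ, algebraMap F K (a ψ) = ca ψ := fun ψ => (haex ψ).choose_spec
  have hKex : ∃ ζ0 : K, IsPrimitiveRoot ζ0 (AddMonoid.exponent G) := ⟨ζ, hζ⟩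
  have horb_y : ∀ j : ℕ, (t j) • y ∉ X := fun j => orbit_notMem hXn hrpos hper hy j
  have horb_y' : ∀ j : ℕ, (t j) • y' ∉ X := fun j => orbit_notMem hXn hrpos hy'per hy' j
  have hsum_pt : ∀ w x : G, x ≠ w → ∑ ψ : AddChar G K, (ψ (-w) : K) * ψ x = 0 := by
    intro w x hxw
    have h1 : ∀ ψ : AddChar G K, (ψ (-w) : K) * ψ x = ψ (x - w) := by
      intro ψ
      rw [← AddChar.map_add_eq_mul, neg_add_eq_sub]
    rw [Finset.sum_congr rfl fun ψ _ => h1 ψ]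
    exact sum_char_ne hKex (sub_ne_zero.mpr hxw)
  -- membership of b
  have hbmem : b ∈ codeSet F K X := by
    intro x hx
    rw [evalF]
    have h1 : ∀ ψ : AddChar G K, algebraMap F K (b ψ) * (ψ x : K)
        = ∑ j ∈ Finset.range r, (ψ (-(t j • y)) : K) * ψ x := by
      intro ψ
      rw [hbspec, hcb, Finset.sum_mul]
      refine Finset.sum_congr rfl fun j _ => ?_
      rw [← AddChar.map_nsmul_eq_pow, smul_neg]
    rw [Finset.sum_congr rfl fun ψ _ => h1 ψ, Finset.sum_comm]
    refine Finset.sum_eq_zero fun j _ => ?_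
    exact hsum_pt (t j • y) x (fun h => horb_y j (h ▸ hx))
  -- membership of a
  have hamem : a ∈ codeSet F K X := by
    intro x hx
    rw [evalF]
    have h1 : ∀ ψ : AddChar G K, algebraMap F K (a ψ) * (ψ x : K)
        = ∑ j ∈ Finset.range r, u ^ (t j) * ((ψ (-(t j • y')) : K) * ψ x) := by
      intro ψ
      rw [haspec, hca, Finset.sum_mul]
      refine Finset.sum_congr rfl fun j _ => ?_
      rw [mul_pow, ← AddChar.map_nsmul_eq_pow, smul_neg]
      ring
    rw [Finset.sum_congr rfl fun ψ _ => h1 ψ, Finset.sum_comm]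
    refine Finset.sum_eq_zero fun j _ => ?_
    rw [← Finset.mul_sum, hsum_pt (t j • y') x (fun h => horb_y' j (h ▸ hx)), mul_zero]
  -- the contradiction
  set z : ℕ → ℕ → G := fun i j => (t i * q) • y - (t j * q) • y with hz
  have h2 : ∀ ψ : AddChar G K, ca ψ * (cb ψ) ^ q
      = ∑ i ∈ Finset.range r, ∑ j ∈ Finset.range r, u ^ (t i) * (ψ (z i j) : K) := by
    intro ψ
    have hcbq : (cb ψ) ^ q = ∑ j ∈ Finset.range r, (ψ (-((t j * q) • y)) : K) := by
      rw [hcb, hqe, sum_pow_char_pow]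
      refine Finset.sum_congr rfl fun j _ => ?_
      rw [← pow_mul, ← hqe, ← AddChar.map_nsmul_eq_pow, smul_neg]
    have hca' : ca ψ = ∑ i ∈ Finset.range r, u ^ (t i) * (ψ ((t i * q) • y) : K) := by
      rw [hca]
      refine Finset.sum_congr rfl fun i _ => ?_
      rw [mul_pow]
      congr 1
      rw [← AddChar.map_nsmul_eq_pow, hny', smul_smul]
    rw [hca', hcbq, Finset.sum_mul_sum]
    refine Finset.sum_congr rfl fun i _ => Finset.sum_congr rfl fun j _ => ?_
    rw [mul_assoc, ← AddChar.map_add_eq_mul, ← sub_eq_add_neg]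
  have hdiag : ∀ i ∈ Finset.range r, ∀ j ∈ Finset.range r,
      (∑ ψ : AddChar G K, (ψ (z i j) : K)) = if i = j then (Fintype.card G : K) else 0 := by
    intro i hi j hj
    by_cases hij : i = j
    · subst hij
      rw [if_pos rfl, hz]
      simp only [sub_self]
      exact sum_char_zero hKex
    · rw [if_neg hij]
      refine sum_char_ne hKex ?_
      rw [hz]
      intro h0
      apply hij
      have h1 : (t i * q) • y = (t j * q) • y := sub_eq_zero.mp h0
      rw [mul_comm (t i) q, mul_comm (t j) q, mul_smul, mul_smul] at h1
      have h2 := nsmul_inj hn h1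
      exact hdist i (Finset.mem_range.mp hi) j (Finset.mem_range.mp hj) h2
  have hcompute : algebraMap F K (herm q a b)
      = (∑ j ∈ Finset.range r, u ^ (t j)) * (Fintype.card G : K) := by
    rw [herm, map_sum]
    have h1 : ∀ ψ : AddChar G K, algebraMap F K (a ψ * b ψ ^ q) = ca ψ * (cb ψ) ^ q := by
      intro ψ; rw [map_mul, map_pow, haspec, hbspec]
    rw [Finset.sum_congr rfl fun ψ _ => h1 ψ, Finset.sum_congr rfl fun ψ _ => h2 ψ]
    rw [show (∑ ψ : AddChar G K, ∑ i ∈ Finset.range r, ∑ j ∈ Finset.range r,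
        u ^ (t i) * (ψ (z i j) : K))
        = ∑ i ∈ Finset.range r, ∑ j ∈ Finset.range r, ∑ ψ : AddChar G K,
            u ^ (t i) * (ψ (z i j) : K) from
      Eq.trans Finset.sum_comm (Finset.sum_congr rfl fun i _ => Finset.sum_comm)]
    rw [Finset.sum_mul]
    refine Finset.sum_congr rfl fun i hi => ?_
    rw [Finset.sum_eq_single i]
    · rw [← Finset.mul_sum, hdiag i hi i hi, if_pos rfl]
    · intro j hj hji
      rw [← Finset.mul_sum, hdiag i hi j hj, if_neg (fun h => hji h.symm), mul_zero]
    · intro h; exact absurd hi h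
  have hherm := hself a hamem b hbmem
  rw [hherm, map_zero] at hcompute
  rcases mul_eq_zero.mp hcompute.symm with h | h
  · exact husum' h
  · exact card_cast_ne_zero hKex h

end KeyLemma

section FinalAux

lemma exists_char (F K : Type) [Field F] [Fintype F] [Field K] [Algebra F K] {q : ℕ}
    (hq : IsPrimePow q) (hF : Fintype.card F = q ^ 2) :
    ∃ p e : ℕ, Nat.Prime p ∧ q = p ^ e ∧ CharP K p := by
  obtain ⟨p, k, hp, hk, hpk⟩ := hq
  have hpn : p.Prime := Nat.prime_iff.mpr hp
  haveI := ringChar.charP F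
  obtain ⟨n, hp', hcard⟩ := FiniteField.card F (ringChar F)
  have h1 : (ringChar F) ^ (n : ℕ) = p ^ (2 * k) := by
    rw [← hcard, hF, ← hpk]; ring
  have hdvd : (ringChar F) ∣ p ^ (2 * k) := by
    rw [← h1]
    exact dvd_pow_self _ n.2.ne'
  have hpp : ringChar F = p :=
    (Nat.prime_dvd_prime_iff_eq hp' hpn).mp (Nat.Prime.dvd_of_dvd_pow hp' hdvd)
  refine ⟨p, k, hpn, hpk.symm, ?_⟩
  haveI : CharP F p := hpp ▸ ringChar.charP F
  exact charP_of_injective_ringHom (algebraMap F K).injective p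

variable {G : Type} [AddCommGroup G] [Fintype G]

lemma image_nsmul_eq {X : Set G} {k : ℕ} (hk : Nat.Coprime (Fintype.card G) k)
    (hX : ∀ x ∈ X, k • x ∈ X) : (fun x : G => k • x) '' X = X := by
  have hinj := nsmul_inj (G := G) hk
  refine Set.eq_of_subset_of_ncard_le ?_ ?_ (Set.toFinite X)
  · rintro w ⟨x, hx, rfl⟩
    exact hX x hx
  · rw [Set.ncard_image_of_injective X hinj]

lemma compl_nsmul_mem {X : Set G} {k : ℕ} (hk : Nat.Coprime (Fintype.card G) k)
    (hX : ∀ x ∈ X, k • x ∈ X) {x : G} (hx : x ∉ X) : k • x ∉ X := by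
  intro hmem
  apply hx
  have himg := image_nsmul_eq hk hX
  have : k • x ∈ (fun x : G => k • x) '' X := himg.symm ▸ hmem
  obtain ⟨x', hx', hEq⟩ := this
  rwa [← nsmul_inj hk hEq]

end FinalAux

/-- Let `C = I_X` be an ideal code in `F[G*]` (so `X` is a union of
`⟨τ_{q²}⟩`-orbits).  Then `C` is Hermitian self-orthogonal if and only if `C = C₀^Z` for
some splitting `(Z, X₀, X₁)` of `G` which is split by `-q`; that is, iff `C = I_{Z ∪ X₀}`
for a partition `G = Z ∪ X₀ ∪ X₁` with `τ_{-q}(X₀) = X₁` and `τ_{-q}(X₁) = X₀`. -/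
theorem stmt4
    {G : Type} [AddCommGroup G] [Fintype G]
    {F K : Type} [Field F] [Fintype F] [Field K] [Algebra F K]
    [Fintype (AddChar G K)]
    (q : ℕ) (hq : IsPrimePow q)
    (hF : Fintype.card F = q ^ 2)
    (hn : Nat.Coprime (Fintype.card G) q)
    (hK : ∃ ζ : K, IsPrimitiveRoot ζ (AddMonoid.exponent G))
    (X : Set G)
    (hX : ∀ x ∈ X, ((q : ℤ) ^ 2) • x ∈ X) :
    (∀ a ∈ codeSet F K X, ∀ b ∈ codeSet F K X, herm q a b = 0) ↔
      ∃ Z X₀ X₁ : Set G,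
        Z ∪ X₀ ∪ X₁ = Set.univ ∧
        Disjoint Z X₀ ∧ Disjoint Z X₁ ∧ Disjoint X₀ X₁ ∧
        tauImg (-(q : ℤ)) X₀ = X₁ ∧ tauImg (-(q : ℤ)) X₁ = X₀ ∧
        X = Z ∪ X₀ := by
  classical
  obtain ⟨p, e, hp, hqe, hcharK⟩ := exists_char F K hq hF
  haveI : Fact p.Prime := ⟨hp⟩
  haveI : CharP K p := hcharK
  have hq1 : 1 < q := hq.one_lt
  have hXn : ∀ x ∈ X, (q ^ 2 : ℕ) • x ∈ X := by
    intro x hx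
    have := hX x hx
    rwa [show ((q : ℤ) ^ 2) = ((q ^ 2 : ℕ) : ℤ) by push_cast; ring, natCast_zsmul] at this
  have hcard2 : Nat.Coprime (Fintype.card G) (q ^ 2) := hn.pow_right 2
  constructor
  · intro hself
    have hsub : tauImg (-(q : ℤ)) Xᶜ ⊆ X := by
      rintro w ⟨y, hy, rfl⟩
      exact key_closed hqe hq1 hF hn hK X hX hself hy
    refine ⟨X \ tauImg (-(q : ℤ)) Xᶜ, tauImg (-(q : ℤ)) Xᶜ, Xᶜ, ?_, ?_, ?_, ?_, ?_, rfl, ?_⟩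
    · rw [Set.diff_union_of_subset hsub, Set.union_compl_self]
    · exact Set.disjoint_sdiff_left
    · exact Set.disjoint_of_subset_left Set.diff_subset disjoint_compl_right
    · exact Set.disjoint_of_subset_left hsub disjoint_compl_right
    · -- tauImg (-q) (tauImg (-q) Xᶜ) = Xᶜ
      have hcompl : ∀ x ∈ Xᶜ, (q ^ 2 : ℕ) • x ∈ Xᶜ :=
        fun x hx => compl_nsmul_mem hcard2 hXn hx
      have himg : (fun x : G => (q ^ 2 : ℕ) • x) '' Xᶜ = Xᶜ := image_nsmul_eq hcard2 hcompl
      rw [tauImg, tauImg, Set.image_image]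
      have hfun : (fun x : G => (-(q : ℤ)) • (-(q : ℤ)) • x) = fun x : G => (q ^ 2 : ℕ) • x := by
        funext x
        rw [smul_smul, neg_mul_neg, show (q : ℤ) * q = ((q ^ 2 : ℕ) : ℤ) by push_cast; ring,
          natCast_zsmul]
      rw [hfun, himg]
    · exact (Set.diff_union_of_subset hsub).symm
  · rintro ⟨Z, X₀, X₁, hcover, hZX₀, hZX₁, hX₀X₁, hT0, hT1, hXeq⟩ a ha b hb
    have hid := herm_eval_identity hqe hn hK a b
    have hzero : ∑ x : G, evalF a ((-(q : ℤ)) • x) * (evalF b x) ^ q = 0 := by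
      refine Finset.sum_eq_zero fun x _ => ?_
      by_cases hx : x ∈ X
      · rw [hb x hx, zero_pow (by omega : q ≠ 0), mul_zero]
      · have hx1 : x ∈ X₁ := by
          have hxu : x ∈ Z ∪ X₀ ∪ X₁ := hcover.symm ▸ Set.mem_univ x
          rcases hxu with hx' | hx'
          · exact absurd (hXeq ▸ hx') hx
          · exact hx'
        have hmem : (-(q : ℤ)) • x ∈ X₀ := hT1 ▸ ⟨x, hx1, rfl⟩
        have hmemX : (-(q : ℤ)) • x ∈ X := by
          rw [hXeq]
          exact Set.mem_union_right _ hmem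
        rw [ha _ hmemX, zero_mul]
    rw [hzero] at hid
    have hne := card_cast_ne_zero (G := G) (K := K) hK
    have hmap0 : algebraMap F K (herm q a b) = 0 := by
      rcases mul_eq_zero.mp hid with h | h
      · exact absurd h hne
      · exact h
    have := (algebraMap F K).injective (hmap0.trans (map_zero (algebraMap F K)).symm)
    exact this
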